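/- For the curve c(s) = (a²+b²)^{-1/2}·(a⁻¹sinh(as), a⁻¹cosh(as), b⁻¹sin(bs), b⁻¹cos(bs)) in Minkowski 4-space (a,b ≠ 0, a ≠ ±b), the frame L(s) = (a²+b²)^{-1/2}(cosh as, sinh as, cos bs, -sin bs), W₁(s) = (a²+b²)^{-1/2}(a sinh as, a cosh as, -b sin bs, -b cos bs), N(s) = -(√(a²+b²)/2)(cosh as, sinh as, -cos bs, sin bs), W₂(s) = (a²+b²)^{-1/2}(b sinh as, b cosh as, a sin bs, a cos bs) satisfies the Cartan–Frenet equations L' = W₁, N' = k₁W₁ + k₂W₂, W₁' = -k₁L - N, W₂' = -k₂L with k₁ = (b²-a²)/2 and k₂ = -ab. -/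

import Mathlib

noncomputable section

lemma hasDerivAt_smul_vec (k : ℝ) {f0 f1 f2 f3 : ℝ → ℝ} {d0 d1 d2 d3 : ℝ} {s : ℝ}
    (h0 : HasDerivAt f0 d0 s) (h1 : HasDerivAt f1 d1 s)
    (h2 : HasDerivAt f2 d2 s) (h3 : HasDerivAt f3 d3 s) :
    HasDerivAt (fun t => k • ![f0 t, f1 t, f2 t, f3 t]) (k • ![d0, d1, d2, d3]) s := by
  rw [hasDerivAt_pi]
  intro i
  fin_cases i <;> simp [Pi.smul_apply, smul_eq_mul]
  exacts [h0.const_mul k, h1.const_mul k, h2.const_mul k, h3.const_mul k]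


/-- Minkowski inner product on ℝ⁴ with signature (-,+,+,+). -/
def mink (x y : Fin 4 → ℝ) : ℝ := -(x 0 * y 0) + x 1 * y 1 + x 2 * y 2 + x 3 * y 3

/-- The given frame for the curve
`c(s) = (a²+b²)^{-1/2} (a⁻¹ sinh as, a⁻¹ cosh as, b⁻¹ sin bs, b⁻¹ cos bs)`
satisfies the Cartan–Frenet equations `L' = W₁`, `N' = k₁W₁ + k₂W₂`,
`W₁' = -k₁L - N`, `W₂' = -k₂L` with `k₁ = (b²-a²)/2` and `k₂ = -ab`. -/
theorem stmt12 (a b : ℝ) (ha : a ≠ 0) (hb : b ≠ 0) (hab : a ≠ b) (hab' : a ≠ -b)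
    (c L N W₁ W₂ : ℝ → (Fin 4 → ℝ)) (k₁ k₂ : ℝ)
    (hc : c = fun s => (Real.sqrt (a ^ 2 + b ^ 2))⁻¹ •
      ![a⁻¹ * Real.sinh (a * s), a⁻¹ * Real.cosh (a * s),
        b⁻¹ * Real.sin (b * s), b⁻¹ * Real.cos (b * s)])
    (hL : L = fun s => (Real.sqrt (a ^ 2 + b ^ 2))⁻¹ •
      ![Real.cosh (a * s), Real.sinh (a * s), Real.cos (b * s), -Real.sin (b * s)])
    (hW₁ : W₁ = fun s => (Real.sqrt (a ^ 2 + b ^ 2))⁻¹ •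
      ![a * Real.sinh (a * s), a * Real.cosh (a * s),
        -(b * Real.sin (b * s)), -(b * Real.cos (b * s))])
    (hN : N = fun s => -(Real.sqrt (a ^ 2 + b ^ 2) / 2) •
      ![Real.cosh (a * s), Real.sinh (a * s), -Real.cos (b * s), Real.sin (b * s)])
    (hW₂ : W₂ = fun s => (Real.sqrt (a ^ 2 + b ^ 2))⁻¹ •
      ![b * Real.sinh (a * s), b * Real.cosh (a * s),
        a * Real.sin (b * s), a * Real.cos (b * s)])
    (hk₁ : k₁ = (b ^ 2 - a ^ 2) / 2) (hk₂ : k₂ = -(a * b)) :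
    ∀ s, deriv L s = W₁ s ∧
      deriv N s = k₁ • W₁ s + k₂ • W₂ s ∧
      deriv W₁ s = -k₁ • L s - N s ∧
      deriv W₂ s = -k₂ • L s := by
  subst hL hW₁ hN hW₂ hk₁ hk₂
  intro s
  have hpos : (0:ℝ) < a ^ 2 + b ^ 2 := by positivity
  set r := Real.sqrt (a ^ 2 + b ^ 2) with hrdef
  have hr0 : r ≠ 0 := (Real.sqrt_pos.mpr hpos).ne'
  have hr2 : r * r = a ^ 2 + b ^ 2 := Real.mul_self_sqrt hpos.le
  -- component derivatives
  have dch : HasDerivAt (fun t => Real.cosh (a * t)) (a * Real.sinh (a * s)) s := by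
    simpa [mul_comm] using ((hasDerivAt_id s).const_mul a).cosh
  have dsh : HasDerivAt (fun t => Real.sinh (a * t)) (a * Real.cosh (a * s)) s := by
    simpa [mul_comm] using ((hasDerivAt_id s).const_mul a).sinh
  have dsin : HasDerivAt (fun t => Real.sin (b * t)) (b * Real.cos (b * s)) s := by
    simpa [mul_comm] using ((hasDerivAt_id s).const_mul b).sin
  have dcos : HasDerivAt (fun t => Real.cos (b * t)) (-(b * Real.sin (b * s))) s := by
    simpa [mul_comm] using ((hasDerivAt_id s).const_mul b).cos
  have HL : HasDerivAt (fun t => r⁻¹ •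
      ![Real.cosh (a * t), Real.sinh (a * t), Real.cos (b * t), -Real.sin (b * t)])
      (r⁻¹ • ![a * Real.sinh (a * s), a * Real.cosh (a * s),
        -(b * Real.sin (b * s)), -(b * Real.cos (b * s))]) s :=
    hasDerivAt_smul_vec r⁻¹ dch dsh dcos (by simpa using dsin.fun_neg)
  have HN : HasDerivAt (fun t => -(r / 2) •
      ![Real.cosh (a * t), Real.sinh (a * t), -Real.cos (b * t), Real.sin (b * t)])
      (-(r / 2) • ![a * Real.sinh (a * s), a * Real.cosh (a * s),
        b * Real.sin (b * s), b * Real.cos (b * s)]) s :=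
    hasDerivAt_smul_vec (-(r / 2)) dch dsh (by simpa using dcos.fun_neg) dsin
  have HW1 : HasDerivAt (fun t => r⁻¹ •
      ![a * Real.sinh (a * t), a * Real.cosh (a * t),
        -(b * Real.sin (b * t)), -(b * Real.cos (b * t))])
      (r⁻¹ • ![a * (a * Real.cosh (a * s)), a * (a * Real.sinh (a * s)),
        -(b * (b * Real.cos (b * s))), b * (b * Real.sin (b * s))]) s :=
    hasDerivAt_smul_vec r⁻¹ (dsh.const_mul a) (dch.const_mul a)
      (by simpa using (dsin.const_mul b).fun_neg) (by simpa [mul_comm, mul_left_comm] using (dcos.const_mul b).fun_neg)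
  have HW2 : HasDerivAt (fun t => r⁻¹ •
      ![b * Real.sinh (a * t), b * Real.cosh (a * t),
        a * Real.sin (b * t), a * Real.cos (b * t)])
      (r⁻¹ • ![b * (a * Real.cosh (a * s)), b * (a * Real.sinh (a * s)),
        a * (b * Real.cos (b * s)), a * (-(b * Real.sin (b * s)))]) s :=
    hasDerivAt_smul_vec r⁻¹ (dsh.const_mul b) (dch.const_mul b)
      (dsin.const_mul a) (dcos.const_mul a)
  have hrinv : r⁻¹ = r / (a ^ 2 + b ^ 2) := by
    rw [eq_div_iff hpos.ne']
    field_simp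
    linarith [hr2]
  refine ⟨HL.deriv, ?_, ?_, ?_⟩
  · rw [HN.deriv]
    funext i
    fin_cases i <;>
      simp only [Pi.smul_apply, smul_eq_mul, Matrix.cons_val_zero, Matrix.cons_val_one,
        Matrix.head_cons, Matrix.cons_val_two, Matrix.tail_cons, Matrix.cons_val_three,
        Pi.add_apply, hrinv, Pi.neg_apply, Fin.reduceFinMk, Matrix.cons_val] <;>
      field_simp <;> ring
  · rw [HW1.deriv]
    funext i
    fin_cases i <;>
      simp only [Pi.smul_apply, smul_eq_mul, Matrix.cons_val_zero, Matrix.cons_val_one,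
        Matrix.head_cons, Matrix.cons_val_two, Matrix.tail_cons, Matrix.cons_val_three,
        Pi.add_apply, Pi.sub_apply, hrinv, Pi.neg_apply, Fin.reduceFinMk, Matrix.cons_val] <;>
      field_simp <;> ring
  · rw [HW2.deriv]
    funext i
    fin_cases i <;>
      simp only [Pi.smul_apply, smul_eq_mul, Matrix.cons_val_zero, Matrix.cons_val_one,
        Matrix.head_cons, Matrix.cons_val_two, Matrix.tail_cons, Matrix.cons_val_three,
        Pi.add_apply, Pi.sub_apply, Pi.neg_apply] <;>
      (simp [Pi.smul_apply, smul_eq_mul]; ring)
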